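/- Let X and Y be independent real-valued random variables with the same discrete law P satisfying E X² < ∞ and E X = 0, and let η ∈ [0,∞) be such that whenever x, y ∈ ℝ satisfy 0 < |x − y| < η, at least one of P({x}), P({y}) vanishes. Then 2·E X² = E (X − Y)² ≥ η · E|X − Y| ≥ η · E|X|, and equality holds in the first inequality if and only if P = λδ_x + (1−λ)δ_{x+η} for some λ ∈ [0,1] and x ∈ ℝ. -/

import Mathlib

open MeasureTheory ProbabilityTheory Real Set

/-- A measure on `ℝ` is discrete if it is a (countable) sum of point masses. -/
def MeasureIsDiscrete (P : Measure ℝ) : Prop :=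
  ∀ A : Set ℝ, MeasurableSet A → P A = ∑' x : A, P {(x : ℝ)}

lemma countable_atoms (P : Measure ℝ) [SFinite P] : {x : ℝ | P {x} ≠ 0}.Countable := by
  have h := Measure.countable_meas_pos_of_disjoint_iUnion₀ (μ := P) (As := fun x : ℝ => {x})
    (fun i => (measurableSet_singleton i).nullMeasurableSet)
    (fun i j hij => (Set.disjoint_singleton.mpr hij).aedisjoint)
  convert h using 1
  ext x
  simp [pos_iff_ne_zero]

lemma null_compl_atoms (P : Measure ℝ) [SFinite P] (hdisc : MeasureIsDiscrete P) :
    P {x : ℝ | P {x} ≠ 0}ᶜ = 0 := by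
  have hc := countable_atoms P
  rw [hdisc _ hc.measurableSet.compl]
  have : ∀ x : ({x : ℝ | P {x} ≠ 0}ᶜ : Set ℝ), P {(x : ℝ)} = 0 := by
    rintro ⟨x, hx⟩
    simpa using hx
  simp [this]

lemma eq_dirac_of_compl_null (P : Measure ℝ) [IsProbabilityMeasure P] (a : ℝ)
    (h : P {a}ᶜ = 0) : P = Measure.dirac a := by
  ext s hs
  rw [Measure.dirac_apply' _ hs]
  by_cases ha : a ∈ s
  · have h1 : P (s \ {a}) = 0 := measure_mono_null (fun x hx => hx.2) h
    have h2 : s ∩ {a} = {a} := by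
      ext x; simp only [Set.mem_inter_iff, Set.mem_singleton_iff]
      constructor
      · rintro ⟨_, rfl⟩; rfl
      · rintro rfl; exact ⟨ha, rfl⟩
    have h3 : P {a} = 1 := by
      have := measure_add_measure_compl (μ := P) (measurableSet_singleton a)
      rw [h, add_zero] at this
      simpa using this
    have key := measure_inter_add_diff (μ := P) s (measurableSet_singleton a)
    rw [h1, add_zero, h2, h3] at key
    rw [← key]
    simp [Set.indicator, ha]
  · have hsub : s ⊆ {a}ᶜ := by
      intro x hx hxa
      rw [Set.mem_singleton_iff] at hxa
      subst hxa
      exact ha hx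
    have : P s = 0 := measure_mono_null hsub h
    simp_all [Set.indicator, ha]

lemma eq_two_point (P : Measure ℝ) [IsProbabilityMeasure P] (a b : ℝ) (hab : a ≠ b)
    (h : P ({a, b} : Set ℝ)ᶜ = 0) :
    P = P {a} • Measure.dirac a + P {b} • Measure.dirac b := by
  have hmab : MeasurableSet ({a, b} : Set ℝ) := ((measurableSet_singleton b).insert a)
  ext s hs
  have key : P s = P (s ∩ {a, b}) := by
    have h0 : P (s \ {a, b}) = 0 := measure_mono_null (fun x hx => hx.2) h
    have := measure_inter_add_diff (μ := P) s hmab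
    rw [h0, add_zero] at this
    exact this.symm
  have hPab : P ({a, b} : Set ℝ) = P {a} + P {b} := by
    have : ({a, b} : Set ℝ) = {a} ∪ {b} := rfl
    rw [this, measure_union (Set.disjoint_singleton.mpr hab) (measurableSet_singleton b)]
  rw [key]
  rw [Measure.add_apply, Measure.smul_apply, Measure.smul_apply,
    Measure.dirac_apply' _ hs, Measure.dirac_apply' _ hs, smul_eq_mul, smul_eq_mul]
  by_cases ha : a ∈ s <;> by_cases hb : b ∈ s
  · have : s ∩ {a, b} = {a, b} := by
      ext x
      simp only [Set.mem_inter_iff, Set.mem_insert_iff, Set.mem_singleton_iff]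
      constructor
      · tauto
      · rintro (rfl | rfl) <;> tauto
    rw [this, hPab]
    simp [Set.indicator, ha, hb]
  · have : s ∩ {a, b} = {a} := by
      ext x
      simp only [Set.mem_inter_iff, Set.mem_insert_iff, Set.mem_singleton_iff]
      constructor
      · rintro ⟨hxs, rfl | rfl⟩
        · rfl
        · exact absurd hxs hb
      · rintro rfl; tauto
    rw [this]
    simp [Set.indicator, ha, hb]
  · have : s ∩ {a, b} = {b} := by
      ext x
      simp only [Set.mem_inter_iff, Set.mem_insert_iff, Set.mem_singleton_iff]
      constructor
      · rintro ⟨hxs, rfl | rfl⟩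
        · exact absurd hxs ha
        · rfl
      · rintro rfl; tauto
    rw [this]
    simp [Set.indicator, ha, hb]
  · have : s ∩ {a, b} = ∅ := by
      rw [Set.eq_empty_iff_forall_notMem]
      rintro x ⟨hxs, rfl | rfl⟩
      · exact ha hxs
      · exact hb hxs
    rw [this]
    simp [Set.indicator, ha, hb]

lemma support_two_point (P : Measure ℝ) [IsProbabilityMeasure P] (hdisc : MeasureIsDiscrete P)
    (η : ℝ) (hη : 0 ≤ η)
    (hAtoms : ∀ x y : ℝ, P {x} ≠ 0 → P {y} ≠ 0 → x = y ∨ |x - y| = η) :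
    ∃ a : ℝ, P ({a, a + η} : Set ℝ)ᶜ = 0 := by
  set A := {x : ℝ | P {x} ≠ 0} with hA
  have hAc : P Aᶜ = 0 := null_compl_atoms P hdisc
  have hAne : A.Nonempty := by
    by_contra hne
    rw [Set.not_nonempty_iff_eq_empty] at hne
    rw [hne, Set.compl_empty] at hAc
    exact (one_ne_zero : (1 : ENNReal) ≠ 0) (by simp at hAc)
  obtain ⟨a₀, ha₀⟩ := hAne
  by_cases hsub : ∀ b ∈ A, b = a₀
  · refine ⟨a₀, measure_mono_null ?_ hAc⟩
    intro x hx hxA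
    exact hx (by simp [hsub x hxA])
  · push_neg at hsub
    obtain ⟨b, hbA, hb⟩ := hsub
    have hdist : |b - a₀| = η := by
      rcases hAtoms b a₀ hbA ha₀ with h | h
      · exact absurd h hb
      · exact h
    have hηpos : 0 < η := by
      rcases lt_or_eq_of_le hη with h | h
      · exact h
      · exfalso; apply hb; rw [← h] at hdist
        have := abs_eq_zero.mp hdist
        linarith
    set a : ℝ := min a₀ b with ha
    have hmaxmem : max a₀ b = a + η := by
      rcases le_or_gt a₀ b with h | h
      · have : b - a₀ = η := by
          rw [abs_of_nonneg (by linarith)] at hdist; exact hdist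
        simp [ha, max_eq_right h, min_eq_left h]; linarith
      · have : a₀ - b = η := by
          rw [abs_of_nonpos (by linarith), neg_sub] at hdist; exact hdist
        simp [ha, max_eq_left h.le, min_eq_right h.le]; linarith
    have haA : a ∈ A := by
      rcases le_or_gt a₀ b with h | h
      · simpa [ha, min_eq_left h] using ha₀
      · simpa [ha, min_eq_right h.le] using hbA
    have haηA : a + η ∈ A := by
      rw [← hmaxmem]
      rcases le_or_gt a₀ b with h | h
      · simpa [max_eq_right h] using hbA
      · simpa [max_eq_left h.le] using ha₀
    refine ⟨a, measure_mono_null ?_ hAc⟩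
    intro x hx hxA
    apply hx
    simp only [Set.mem_insert_iff, Set.mem_singleton_iff]
    by_contra hcon
    push_neg at hcon
    obtain ⟨hxa, hxaη⟩ := hcon
    have h1 : |x - a| = η := by
      rcases hAtoms x a hxA haA with h | h
      · exact absurd h hxa
      · exact h
    have h2 : |x - (a + η)| = η := by
      rcases hAtoms x (a + η) hxA haηA with h | h
      · exact absurd h hxaη
      · exact h
    rcases abs_eq hη |>.mp h1 with h | h <;> rcases abs_eq hη |>.mp h2 with h' | h' <;> linarith

/-- for `X, Y` independent with the same discrete centered square-integrable
law `P` whose atoms are at mutual distance `≥ η`: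
`2·E X² = E(X−Y)² ≥ η·E|X−Y| ≥ η·E|X|`, with equality in the first inequality iff
`P = λδ_x + (1−λ)δ_{x+η}`. -/
theorem two_point_equality {Ω : Type*} [MeasurableSpace Ω] (μ : Measure Ω)
    [IsProbabilityMeasure μ] (X Y : Ω → ℝ) (hX : Measurable X) (hY : Measurable Y)
    (hindep : IndepFun X Y μ) (P : Measure ℝ)
    (hPX : Measure.map X μ = P) (hPY : Measure.map Y μ = P)
    (hdisc : MeasureIsDiscrete P)
    (hint : Integrable (fun ω => (X ω) ^ 2) μ) (hmean : ∫ ω, X ω ∂μ = 0)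
    (η : ℝ) (hη : 0 ≤ η)
    (hsep : ∀ x y : ℝ, 0 < |x - y| → |x - y| < η → P {x} = 0 ∨ P {y} = 0) :
    2 * ∫ ω, (X ω) ^ 2 ∂μ = ∫ ω, (X ω - Y ω) ^ 2 ∂μ ∧
    (∫ ω, (X ω - Y ω) ^ 2 ∂μ) ≥ η * ∫ ω, |X ω - Y ω| ∂μ ∧
    η * ∫ ω, |X ω - Y ω| ∂μ ≥ η * ∫ ω, |X ω| ∂μ ∧
    ((∫ ω, (X ω - Y ω) ^ 2 ∂μ) = η * ∫ ω, |X ω - Y ω| ∂μ ↔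
      ∃ (l : ℝ) (x : ℝ), 0 ≤ l ∧ l ≤ 1 ∧
        P = ENNReal.ofReal l • Measure.dirac x
            + ENNReal.ofReal (1 - l) • Measure.dirac (x + η)) := by
  have hXae : AEMeasurable X μ := hX.aemeasurable
  have hYae : AEMeasurable Y μ := hY.aemeasurable
  have hpairm : Measurable fun ω => (X ω, Y ω) := hX.prodMk hY
  have hprod : Measure.map (fun ω => (X ω, Y ω)) μ = P.prod P := by
    rw [(indepFun_iff_map_prod_eq_prod_map_map hXae hYae).mp hindep, hPX, hPY]
  haveI hPprob : IsProbabilityMeasure P := hPX ▸ Measure.isProbabilityMeasure_map hXae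
  -- integrability facts
  have hsqP : Integrable (fun t : ℝ => t ^ 2) P := by
    rw [← hPX]
    exact (integrable_map_measure ((by fun_prop : Measurable fun t : ℝ => t ^ 2).aestronglyMeasurable)
      hXae).mpr hint
  have hYint2 : Integrable (fun ω => Y ω ^ 2) μ :=
    (integrable_map_measure ((by fun_prop : Measurable fun t : ℝ => t ^ 2).aestronglyMeasurable) hYae).mp
      (by rw [hPY]; exact hsqP)
  have hX2 : MemLp X 2 μ := (memLp_two_iff_integrable_sq hX.aestronglyMeasurable).mpr hint
  have hY2 : MemLp Y 2 μ := (memLp_two_iff_integrable_sq hY.aestronglyMeasurable).mpr hYint2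
  have hXint : Integrable X μ := hX2.integrable one_le_two
  have hYint : Integrable Y μ := hY2.integrable one_le_two
  have hXYint : Integrable (fun ω => X ω - Y ω) μ := hXint.sub hYint
  have hXY2 : MemLp (fun ω => X ω - Y ω) 2 μ := hX2.sub hY2
  have hsubSq : Integrable (fun ω => (X ω - Y ω) ^ 2) μ := hXY2.integrable_sq
  have habsXY : Integrable (fun ω => |X ω - Y ω|) μ := hXYint.abs
  have habsX : Integrable (fun ω => |X ω|) μ := hXint.abs
  -- part 1
  have hXYprodInt : Integrable (fun ω => X ω * Y ω) μ := hindep.integrable_mul hXint hYint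
  have part1 : 2 * ∫ ω, X ω ^ 2 ∂μ = ∫ ω, (X ω - Y ω) ^ 2 ∂μ := by
    have hEY2 : ∫ ω, Y ω ^ 2 ∂μ = ∫ ω, X ω ^ 2 ∂μ := by
      have e1 : ∫ ω, X ω ^ 2 ∂μ = ∫ t : ℝ, t ^ 2 ∂P := by
        rw [← hPX, integral_map hXae ((by fun_prop : Measurable fun t : ℝ => t ^ 2).aestronglyMeasurable)]
      have e2 : ∫ ω, Y ω ^ 2 ∂μ = ∫ t : ℝ, t ^ 2 ∂P := by
        rw [← hPY, integral_map hYae ((by fun_prop : Measurable fun t : ℝ => t ^ 2).aestronglyMeasurable)]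
      rw [e1, e2]
    have hmul : ∫ ω, X ω * Y ω ∂μ = 0 := by
      have h := hindep.integral_mul_eq_mul_integral hX.aestronglyMeasurable hY.aestronglyMeasurable
      have : ∫ ω, X ω * Y ω ∂μ = (∫ ω, X ω ∂μ) * ∫ ω, Y ω ∂μ := h
      rw [this, hmean, zero_mul]
    have hi1 : Integrable (fun ω => X ω ^ 2 + Y ω ^ 2) μ := hint.add hYint2
    have hi2 : Integrable (fun ω => 2 * (X ω * Y ω)) μ := hXYprodInt.const_mul 2
    have hsplit : ∫ ω, (X ω ^ 2 + Y ω ^ 2 - 2 * (X ω * Y ω)) ∂μ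
        = (∫ ω, X ω ^ 2 ∂μ) + (∫ ω, Y ω ^ 2 ∂μ) - 2 * ∫ ω, X ω * Y ω ∂μ := by
      rw [integral_sub hi1 hi2, integral_add hint hYint2, integral_const_mul]
    have hcongr : ∫ ω, (X ω - Y ω) ^ 2 ∂μ
        = ∫ ω, (X ω ^ 2 + Y ω ^ 2 - 2 * (X ω * Y ω)) ∂μ := by
      congr 1
      ext ω
      ring
    rw [hcongr, hsplit, hEY2, hmul]
    ring
  -- separation a.e.
  set A : Set ℝ := {x | P {x} ≠ 0} with hAdef
  have hAc : P Aᶜ = 0 := null_compl_atoms P hdisc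
  have hprodAc : (P.prod P) ((A ×ˢ A)ᶜ) = 0 := by
    have hsub : (A ×ˢ A)ᶜ ⊆ (Aᶜ ×ˢ (Set.univ : Set ℝ)) ∪ ((Set.univ : Set ℝ) ×ˢ Aᶜ) := by
      intro p hp
      simp only [Set.mem_compl_iff, Set.mem_prod, not_and_or] at hp
      rcases hp with h | h
      · exact Or.inl ⟨h, trivial⟩
      · exact Or.inr ⟨trivial, h⟩
    refine measure_mono_null hsub ?_
    refine le_antisymm (le_trans (measure_union_le _ _) ?_) (by simp)
    rw [Measure.prod_prod, Measure.prod_prod, hAc]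
    simp
  have haeS : ∀ᵐ p : ℝ × ℝ ∂(P.prod P), p.1 = p.2 ∨ η ≤ |p.1 - p.2| := by
    rw [ae_iff]
    refine measure_mono_null ?_ hprodAc
    intro p hp
    simp only [Set.mem_setOf_eq, not_or, not_le] at hp
    obtain ⟨hne, hlt⟩ := hp
    intro hpA
    obtain ⟨h1, h2⟩ := hpA
    have habs : 0 < |p.1 - p.2| := abs_pos.mpr (sub_ne_zero.mpr hne)
    rcases hsep p.1 p.2 habs hlt with h | h
    · exact h1 h
    · exact h2 h
  have hmS : MeasurableSet {p : ℝ × ℝ | p.1 = p.2 ∨ η ≤ |p.1 - p.2|} := by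
    refine MeasurableSet.union ?_ ?_
    · exact measurableSet_eq_fun measurable_fst measurable_snd
    · exact measurableSet_le measurable_const ((measurable_fst.sub measurable_snd).abs)
  have haeSμ : ∀ᵐ ω ∂μ, X ω = Y ω ∨ η ≤ |X ω - Y ω| :=
    (ae_map_iff hpairm.aemeasurable hmS).mp (by rw [hprod]; exact haeS)
  -- part 2
  have hptwise : ∀ᵐ ω ∂μ, η * |X ω - Y ω| ≤ (X ω - Y ω) ^ 2 := by
    filter_upwards [haeSμ] with ω h
    rcases h with h | h
    · simp [h]
    · have h0 : 0 ≤ |X ω - Y ω| := abs_nonneg _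
      calc η * |X ω - Y ω| ≤ |X ω - Y ω| * |X ω - Y ω| := mul_le_mul_of_nonneg_right h h0
        _ = (X ω - Y ω) ^ 2 := by rw [← sq_abs]; ring
  have part2 : (∫ ω, (X ω - Y ω) ^ 2 ∂μ) ≥ η * ∫ ω, |X ω - Y ω| ∂μ := by
    rw [← integral_const_mul]
    exact integral_mono_ae (habsXY.const_mul η) hsubSq hptwise
  -- part 3
  have hidP : Integrable (fun t : ℝ => t) P := by
    rw [← hPX]
    exact (integrable_map_measure ((by fun_prop : Measurable fun t : ℝ => t).aestronglyMeasurable) hXae).mpr hXint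
  have hmeanP : ∫ t : ℝ, t ∂P = 0 := by
    rw [← hPX, integral_map hXae ((by fun_prop : Measurable fun t : ℝ => t).aestronglyMeasurable)]
    exact hmean
  have hsubP : Integrable (fun p : ℝ × ℝ => p.1 - p.2) (P.prod P) := by
    rw [← hprod]
    exact (integrable_map_measure ((measurable_fst.sub measurable_snd).aestronglyMeasurable)
      hpairm.aemeasurable).mpr hXYint
  have part3core : (∫ t : ℝ, |t| ∂P) ≤ ∫ ω, |X ω - Y ω| ∂μ := by
    have e : ∫ ω, |X ω - Y ω| ∂μ = ∫ p : ℝ × ℝ, |p.1 - p.2| ∂(P.prod P) := by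
      rw [← hprod, integral_map (f := fun p : ℝ × ℝ => |p.1 - p.2|) hpairm.aemeasurable
        ((measurable_fst.sub measurable_snd).abs.aestronglyMeasurable)]
    rw [e, integral_prod _ hsubP.abs]
    have hinner : ∀ x : ℝ, |x| ≤ ∫ y : ℝ, |x - y| ∂P := by
      intro x
      have h1 : ∫ y : ℝ, (x - y) ∂P = x := by
        rw [integral_sub (integrable_const x) hidP, integral_const, hmeanP]
        simp
      calc |x| = |∫ y : ℝ, (x - y) ∂P| := by rw [h1]
        _ ≤ ∫ y : ℝ, |x - y| ∂P := by
            simpa [Real.norm_eq_abs] using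
              norm_integral_le_integral_norm (μ := P) (fun y : ℝ => x - y)
    have hintInner : Integrable (fun x : ℝ => ∫ y : ℝ, |x - y| ∂P) P := by
      simpa [Real.norm_eq_abs] using hsubP.integral_norm_prod_left
    exact integral_mono hidP.abs hintInner hinner
  have eX : ∫ ω, |X ω| ∂μ = ∫ t : ℝ, |t| ∂P := by
    rw [← hPX, integral_map hXae ((by fun_prop : Measurable fun t : ℝ => |t|).aestronglyMeasurable)]
  have part3 : η * ∫ ω, |X ω - Y ω| ∂μ ≥ η * ∫ ω, |X ω| ∂μ := by
    apply mul_le_mul_of_nonneg_left _ hη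
    rw [eX]
    exact part3core
  refine ⟨part1, part2, part3, ?_⟩
  have hmE : MeasurableSet {p : ℝ × ℝ | (p.1 - p.2) ^ 2 = η * |p.1 - p.2|} := by
    refine measurableSet_eq_fun ?_ ?_
    · exact (measurable_fst.sub measurable_snd).pow_const 2
    · exact ((measurable_fst.sub measurable_snd).abs).const_mul η
  constructor
  · -- forward
    intro heq
    have hg0 : ∀ᵐ ω ∂μ, 0 ≤ (X ω - Y ω) ^ 2 - η * |X ω - Y ω| := by
      filter_upwards [hptwise] with ω h
      linarith
    have hgint : Integrable (fun ω => (X ω - Y ω) ^ 2 - η * |X ω - Y ω|) μ :=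
      hsubSq.sub (habsXY.const_mul η)
    have hgzero : ∫ ω, ((X ω - Y ω) ^ 2 - η * |X ω - Y ω|) ∂μ = 0 := by
      rw [integral_sub hsubSq (habsXY.const_mul η), integral_const_mul, heq, sub_self]
    have hae0 := (integral_eq_zero_iff_of_nonneg_ae hg0 hgint).mp hgzero
    have haeE : ∀ᵐ ω ∂μ, (X ω - Y ω) ^ 2 = η * |X ω - Y ω| := by
      filter_upwards [hae0] with ω h
      have h' : (X ω - Y ω) ^ 2 - η * |X ω - Y ω| = 0 := h
      linarith
    have haeEP : ∀ᵐ p : ℝ × ℝ ∂(P.prod P), (p.1 - p.2) ^ 2 = η * |p.1 - p.2| := by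
      rw [← hprod]
      exact (ae_map_iff hpairm.aemeasurable hmE).mpr haeE
    have hAtoms : ∀ x y : ℝ, P {x} ≠ 0 → P {y} ≠ 0 → x = y ∨ |x - y| = η := by
      intro x y hx hy
      have hmem : (x - y) ^ 2 = η * |x - y| := by
        by_contra hcon
        have hsing : (P.prod P) {(x, y)} ≠ 0 := by
          rw [← Set.singleton_prod_singleton, Measure.prod_prod]
          exact mul_ne_zero hx hy
        refine hsing (measure_mono_null ?_ (ae_iff.mp haeEP))
        intro p hp
        simp only [Set.mem_singleton_iff] at hp
        subst hp
        exact hcon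
      have hfactor : |x - y| * (|x - y| - η) = 0 := by
        have hsq : (x - y) ^ 2 = |x - y| ^ 2 := (sq_abs _).symm
        nlinarith [hmem, hsq]
      rcases mul_eq_zero.mp hfactor with h | h
      · left
        have := abs_eq_zero.mp h
        linarith
      · right
        linarith
    obtain ⟨a, ha⟩ := support_two_point P hdisc η hη hAtoms
    by_cases hη0 : η = 0
    · subst hη0
      have ha' : P ({a} : Set ℝ)ᶜ = 0 := by
        have he : ({a, a + 0} : Set ℝ) = {a} := by norm_num
        rwa [he] at ha
      refine ⟨1, a, zero_le_one, le_refl 1, ?_⟩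
      rw [eq_dirac_of_compl_null P a ha']
      simp
    · have hane : a ≠ a + η := fun h => hη0 (by linarith)
      have hPab : P {a} + P {a + η} = 1 := by
        have h1 : P ({a, a + η} : Set ℝ) = 1 := by
          have h2 := measure_add_measure_compl (μ := P)
            ((measurableSet_singleton (a + η)).insert a)
          rw [ha, add_zero] at h2
          simpa using h2
        rw [← h1]
        exact (measure_union (Set.disjoint_singleton.mpr hane)
          (measurableSet_singleton _)).symm
      have hfin : P {a} ≠ ⊤ := measure_ne_top _ _
      have hfin' : P {a + η} ≠ ⊤ := measure_ne_top _ _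
      refine ⟨(P {a}).toReal, a, ENNReal.toReal_nonneg, ?_, ?_⟩
      · have := prob_le_one (μ := P) (s := {a})
        calc (P {a}).toReal ≤ (1 : ENNReal).toReal :=
              ENNReal.toReal_mono ENNReal.one_ne_top this
          _ = 1 := by simp
      · have h2 : ENNReal.ofReal ((P {a}).toReal) = P {a} := ENNReal.ofReal_toReal hfin
        have h3 : ENNReal.ofReal (1 - (P {a}).toReal) = P {a + η} := by
          have h4 : (P {a + η}).toReal = 1 - (P {a}).toReal := by
            have h5 := congrArg ENNReal.toReal hPab
            rw [ENNReal.toReal_add hfin hfin'] at h5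
            simp only [ENNReal.toReal_one] at h5
            linarith
          rw [← h4, ENNReal.ofReal_toReal hfin']
        rw [h2, h3]
        exact eq_two_point P a (a + η) hane ha
  · -- reverse
    rintro ⟨l, x, hl0, hl1, hP⟩
    have hmS' : MeasurableSet (({x, x + η} : Set ℝ)ᶜ) :=
      ((measurableSet_singleton (x + η)).insert x).compl
    have hScompl : P (({x, x + η} : Set ℝ)ᶜ) = 0 := by
      rw [hP, Measure.add_apply, Measure.smul_apply, Measure.smul_apply,
        Measure.dirac_apply' _ hmS', Measure.dirac_apply' _ hmS']
      simp [Set.indicator]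
    have hprodnull : (P.prod P) ((({x, x + η} : Set ℝ) ×ˢ ({x, x + η} : Set ℝ))ᶜ) = 0 := by
      have hsub : (({x, x + η} : Set ℝ) ×ˢ ({x, x + η} : Set ℝ))ᶜ ⊆
          ((({x, x + η} : Set ℝ)ᶜ) ×ˢ (Set.univ : Set ℝ)) ∪
          ((Set.univ : Set ℝ) ×ˢ (({x, x + η} : Set ℝ)ᶜ)) := by
        intro p hp
        simp only [Set.mem_compl_iff, Set.mem_prod, not_and_or] at hp
        rcases hp with h | h
        · exact Or.inl ⟨h, trivial⟩
        · exact Or.inr ⟨trivial, h⟩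
      refine measure_mono_null hsub ?_
      refine le_antisymm (le_trans (measure_union_le _ _) ?_) (by simp)
      rw [Measure.prod_prod, Measure.prod_prod, hScompl]
      simp
    have haeP : ∀ᵐ p : ℝ × ℝ ∂(P.prod P), (p.1 - p.2) ^ 2 = η * |p.1 - p.2| := by
      rw [ae_iff]
      refine measure_mono_null ?_ hprodnull
      intro p hp hpmem
      obtain ⟨h1, h2⟩ := hpmem
      apply hp
      simp only [Set.mem_insert_iff, Set.mem_singleton_iff] at h1 h2
      have key : ∀ u v : ℝ, (u = x ∨ u = x + η) → (v = x ∨ v = x + η) →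
          (u - v) ^ 2 = η * |u - v| := by
        rintro u v (hu | hu) (hv | hv) <;> rw [hu, hv]
        · simp
        · have hd : x - (x + η) = -η := by ring
          rw [hd, abs_neg, abs_of_nonneg hη]
          ring
        · have hd : x + η - x = η := by ring
          rw [hd, abs_of_nonneg hη]
          ring
        · simp
      exact key p.1 p.2 h1 h2
    have haeμ : ∀ᵐ ω ∂μ, (X ω - Y ω) ^ 2 = η * |X ω - Y ω| :=
      (ae_map_iff hpairm.aemeasurable hmE).mp (by rw [hprod]; exact haeP)
    calc ∫ ω, (X ω - Y ω) ^ 2 ∂μ = ∫ ω, η * |X ω - Y ω| ∂μ := integral_congr_ae haeμ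
      _ = η * ∫ ω, |X ω - Y ω| ∂μ := integral_const_mul η _
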